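/- Let A = (x_A, t_A), B = (x_B, t_B) with x_A < x_B and t_A > t_B, and let A' = (x_{A'}, t_{A'}), B' = (x_{B'}, t_{B'}) with x_{A'} < x_{B'} and t_{A'} > t_{B'}. Suppose the distance from A to A' is greater than 2ε, |AB| ≤ ε, and |A'B'| ≤ ε. Then the sliding triangles of segments AB and A'B' (the convex hulls of {A, B, (x_B, t_A)} and {A', B', (x_{B'}, t_{A'})} respectively) are disjoint. -/

import Mathlib

/-- Euclidean distance on the `(x,t)`-plane `ℝ × ℝ`. -/
noncomputable def eDist (p q : ℝ × ℝ) : ℝ :=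
  Real.sqrt ((p.1 - q.1) ^ 2 + (p.2 - q.2) ^ 2)

/-- The sliding triangle of an up-arc from `A` to `B`. -/
def slidingTriangle (A B : ℝ × ℝ) : Set (ℝ × ℝ) :=
  convexHull ℝ {A, B, (B.1, A.2)}

noncomputable def toE2 : (ℝ × ℝ) →ₗ[ℝ] EuclideanSpace ℝ (Fin 2) where
  toFun p := WithLp.toLp 2 ![p.1, p.2]
  map_add' p q := by
    ext i
    fin_cases i <;> simp [Matrix.cons_val_zero, Matrix.cons_val_one]
  map_smul' c p := by
    ext i
    fin_cases i <;> simp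

lemma eDist_eq (p q : ℝ × ℝ) : eDist p q = dist (toE2 p) (toE2 q) := by
  rw [EuclideanSpace.dist_eq, eDist]
  congr 1
  simp [toE2, Fin.sum_univ_two, Real.dist_eq, sq_abs]

lemma tri_sub (A B : ℝ × ℝ) (ε : ℝ) (hAB : eDist A B ≤ ε) :
    toE2 '' slidingTriangle A B ⊆ Metric.closedBall (toE2 A) ε := by
  rw [slidingTriangle, LinearMap.image_convexHull]
  apply convexHull_min _ (convex_closedBall _ _)
  rintro x ⟨p, hp, rfl⟩
  have hε : Real.sqrt ((A.1 - B.1) ^ 2 + (A.2 - B.2) ^ 2) ≤ ε := hAB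
  have h1 : |A.1 - B.1| ≤ ε := by
    refine le_trans ?_ hε
    rw [← Real.sqrt_sq_eq_abs]
    exact Real.sqrt_le_sqrt (by nlinarith [sq_nonneg (A.2 - B.2)])
  rcases hp with rfl | rfl | rfl
  · simpa using le_trans (Real.sqrt_nonneg _) hε
  · rw [Metric.mem_closedBall, dist_comm, ← eDist_eq]; exact hAB
  · rw [Metric.mem_closedBall, dist_comm, ← eDist_eq]
    have : eDist A (B.1, A.2) = |A.1 - B.1| := by
      simp [eDist, Real.sqrt_sq_eq_abs]
    rw [this]; exact h1

/-- If the lower vertices of two up-arcs of mesh at most `ε` are at Euclidean distance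
greater than `2ε`, then their sliding triangles are disjoint. -/
theorem stmt_6 (A B A' B' : ℝ × ℝ) (ε : ℝ)
    (hx : A.1 < B.1) (ht : B.2 < A.2)
    (hx' : A'.1 < B'.1) (ht' : B'.2 < A'.2)
    (hAA' : 2 * ε < eDist A A')
    (hAB : eDist A B ≤ ε) (hAB' : eDist A' B' ≤ ε) :
    Disjoint (slidingTriangle A B) (slidingTriangle A' B') := by
  rw [Set.disjoint_left]
  intro p hp hp'
  have h1 := tri_sub A B ε hAB ⟨p, hp, rfl⟩
  have h2 := tri_sub A' B' ε hAB' ⟨p, hp', rfl⟩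
  rw [Metric.mem_closedBall] at h1 h2
  have : eDist A A' ≤ 2 * ε := by
    rw [eDist_eq]
    calc dist (toE2 A) (toE2 A') ≤ dist (toE2 A) (toE2 p) + dist (toE2 p) (toE2 A') :=
      dist_triangle _ _ _
    _ ≤ ε + ε := add_le_add (dist_comm (toE2 A) (toE2 p) ▸ h1) (dist_comm (toE2 p) (toE2 A') ▸ h2)
    _ = 2 * ε := by ring
  linarith
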